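/- Let $q > 1$ be a real number (e.g. $q+1$ the degree of a finite $(q+1)$-regular graph on $n$ vertices) and let $A$ be the adjacency matrix of a finite $(q+1)$-regular simple graph, with real eigenvalues $\lambda_1, \dots, \lambda_n$ (so $|\lambda_j| \le q+1$ for all $j$). Then the following are equivalent: (i) every $u \in \mathbb{C}$ with $1/q < |u| < 1$ and $\det\big((1+qu^2)I - uA\big) = 0$ satisfies $|u| = 1/\sqrt{q}$; (ii) every eigenvalue $\lambda_j$ with $|\lambda_j| \ne q+1$ satisfies $|\lambda_j| \le 2\sqrt{q}$. -/

import Mathlib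

set_option maxHeartbeats 1000000

open Matrix in
lemma detFactor {n : ℕ} (A : Matrix (Fin n) (Fin n) ℝ) (hA : A.IsHermitian) (c u : ℂ) :
    (c • (1 : Matrix (Fin n) (Fin n) ℂ) - u • A.map (fun x : ℝ => (x : ℂ))).det
      = ∏ j, (c - u * (hA.eigenvalues j : ℂ)) := by
  classical
  set U : Matrix (Fin n) (Fin n) ℝ := (hA.eigenvectorUnitary : Matrix (Fin n) (Fin n) ℝ) with hUdef
  have hU1 : U * star U = 1 := (Matrix.mem_unitaryGroup_iff).mp hA.eigenvectorUnitary.2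
  have hspec : A = U * Matrix.diagonal (RCLike.ofReal ∘ hA.eigenvalues) * star U :=
    hA.spectral_theorem
  set f : ℝ →+* ℂ := Complex.ofRealHom with hf
  have hmap : A.map (fun x : ℝ => (x : ℂ)) = A.map f := rfl
  have hU1' : U.map f * (star U).map f = 1 := by
    rw [← Matrix.map_mul, hU1, Matrix.map_one f f.map_zero f.map_one]
  have hdiag : Matrix.diagonal (fun j => c - u * (hA.eigenvalues j : ℂ))
      = c • (1 : Matrix (Fin n) (Fin n) ℂ)
        - u • (Matrix.diagonal (RCLike.ofReal ∘ hA.eigenvalues)).map f := by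
    ext i k
    by_cases h : i = k <;>
      simp [Matrix.diagonal_apply, Matrix.one_apply, h, Matrix.sub_apply, hf,
        Complex.ofRealHom_eq_coe]
  have key : c • (1 : Matrix (Fin n) (Fin n) ℂ) - u • A.map f
      = U.map f * (Matrix.diagonal (fun j => c - u * (hA.eigenvalues j : ℂ))) * (star U).map f := by
    rw [hdiag, Matrix.mul_sub, Matrix.sub_mul]
    congr 1
    · rw [Matrix.mul_smul, Matrix.mul_one, Matrix.smul_mul, hU1']
    · rw [Matrix.mul_smul, Matrix.smul_mul, ← Matrix.map_mul, ← Matrix.map_mul, ← hspec]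
  rw [hmap, key, Matrix.det_mul, Matrix.det_mul, Matrix.det_diagonal]
  have h1 : (U.map f).det * ((star U).map f).det = 1 := by
    rw [← Matrix.det_mul, hU1', Matrix.det_one]
  rw [mul_right_comm, h1, one_mul]

lemma eigBound {n d : ℕ} (G : SimpleGraph (Fin n)) [DecidableRel G.Adj]
    (hreg : G.IsRegularOfDegree d) (hA : (G.adjMatrix ℝ).IsHermitian) (j : Fin n) :
    |hA.eigenvalues j| ≤ (d : ℝ) := by
  classical
  have hev : Module.End.HasEigenvalue (Matrix.toLin' (G.adjMatrix ℝ)) (hA.eigenvalues j) := by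
    apply Module.End.hasEigenvalue_of_hasEigenvector (x := ⇑(hA.eigenvectorBasis j))
    constructor
    · rw [Module.End.mem_eigenspace_iff, Matrix.toLin'_apply, hA.mulVec_eigenvectorBasis]
    · have := hA.eigenvectorBasis.orthonormal.ne_zero j
      intro h
      apply this
      ext i
      exact congrFun h i
  obtain ⟨k, hk⟩ := eigenvalue_mem_ball hev
  rw [Metric.mem_closedBall, Real.dist_eq] at hk
  have hdiag : G.adjMatrix ℝ k k = 0 := by simp
  rw [hdiag, sub_zero] at hk
  have hsum : ∑ i, G.adjMatrix ℝ k i = (d : ℝ) := by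
    have h := G.adjMatrix_mulVec_const_apply_of_regular (α := ℝ) (a := 1) hreg (v := k)
    simpa [Matrix.mulVec, dotProduct] using h
  have hb : ∑ i ∈ Finset.univ.erase k, ‖G.adjMatrix ℝ k i‖ ≤ (d : ℝ) := by
    have he : ∀ i, ‖G.adjMatrix ℝ k i‖ = G.adjMatrix ℝ k i := by
      intro i
      rw [Real.norm_eq_abs, abs_of_nonneg]
      by_cases h : G.Adj k i <;> simp [h]
    calc ∑ i ∈ Finset.univ.erase k, ‖G.adjMatrix ℝ k i‖
        = ∑ i ∈ Finset.univ.erase k, G.adjMatrix ℝ k i :=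
          Finset.sum_congr rfl fun i _ => he i
      _ ≤ ∑ i, G.adjMatrix ℝ k i := by
          apply Finset.sum_le_sum_of_subset_of_nonneg (Finset.erase_subset _ _)
          intro i _ _
          by_cases h : G.Adj k i <;> simp [h]
      _ = (d : ℝ) := hsum
  exact hk.trans hb


/-- Stark–Terras: for a finite `(q+1)`-regular graph with adjacency matrix `A`
and eigenvalues `λ_j`, the graph theory Riemann hypothesis — every `u` with `1/q < |u| < 1`
and `det((1+qu²)I - uA) = 0` satisfies `|u| = 1/√q` — is equivalent to the Ramanujan
property: every eigenvalue with `|λ_j| ≠ q+1` satisfies `|λ_j| ≤ 2√q`. -/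
theorem stark_terras_GTRH_iff_ramanujan
    (n d : ℕ) (G : SimpleGraph (Fin n)) [DecidableRel G.Adj]
    (hreg : G.IsRegularOfDegree d)
    (q : ℝ) (hq : 1 < q) (hd : (d : ℝ) = q + 1)
    (hA : (G.adjMatrix ℝ).IsHermitian) :
    (∀ u : ℂ, 1 / q < ‖u‖ → ‖u‖ < 1 →
        ((1 + (q : ℂ) * u ^ 2) • (1 : Matrix (Fin n) (Fin n) ℂ)
            - u • (G.adjMatrix ℝ).map (fun x : ℝ => (x : ℂ))).det = 0 →
        ‖u‖ = 1 / Real.sqrt q)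
      ↔
    (∀ j : Fin n, |hA.eigenvalues j| ≠ q + 1 → |hA.eigenvalues j| ≤ 2 * Real.sqrt q) := by

  have hq0 : (0 : ℝ) < q := by linarith
  have hss : Real.sqrt q * Real.sqrt q = q := Real.mul_self_sqrt hq0.le
  have hsqpos : 0 < Real.sqrt q := Real.sqrt_pos.mpr hq0
  have hsq1 : 1 < Real.sqrt q := by nlinarith [hss]
  constructor
  · -- GTRH → Ramanujan
    intro H j hne
    by_contra hgt
    push_neg at hgt
    set t := |hA.eigenvalues j| with ht_def
    have hb : t ≤ q + 1 := by
      have := eigBound G hreg hA j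
      rwa [hd] at this
    have hlt : t < q + 1 := lt_of_le_of_ne hb hne
    have ht0 : 0 < t := lt_of_le_of_lt (by positivity) hgt
    have hdisc : 0 < t ^ 2 - 4 * q := by nlinarith [hss, hgt, Real.sqrt_nonneg q]
    set s := Real.sqrt (t ^ 2 - 4 * q) with hs_def
    have hs2 : s ^ 2 = t ^ 2 - 4 * q := Real.sq_sqrt hdisc.le
    have hs0 : 0 ≤ s := Real.sqrt_nonneg _
    set x := (t + s) / (2 * q) with hx_def
    have hroot : q * x ^ 2 - t * x + 1 = 0 := by
      rw [hx_def]
      field_simp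
      nlinarith [hs2]
    have hx_gt : 1 / Real.sqrt q < x := by
      rw [hx_def, div_lt_div_iff₀ hsqpos (by positivity)]
      nlinarith [hss, hs0, hgt, hsqpos]
    have hxpos : 0 < x := lt_trans (by positivity) hx_gt
    have hx_lt1 : x < 1 := by
      rw [hx_def, div_lt_one (by positivity)]
      have h2 : s < 2 * q - t := by
        rw [hs_def, Real.sqrt_lt' (by nlinarith)]
        nlinarith
      linarith
    have hx_gtq : 1 / q < x := by
      have h1q : 1 / q < 1 / Real.sqrt q := by
        rw [div_lt_div_iff₀ hq0 hsqpos]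
        nlinarith [hss, hsq1]
      linarith
    set ε : ℝ := if 0 ≤ hA.eigenvalues j then 1 else -1 with hε_def
    have hε : ε * ε = 1 := by
      by_cases h : 0 ≤ hA.eigenvalues j <;> simp [hε_def, h]
    have hlam : hA.eigenvalues j = ε * t := by
      by_cases h : 0 ≤ hA.eigenvalues j
      · simp [hε_def, h, ht_def, abs_of_nonneg h]
      · simp [hε_def, h, ht_def, abs_of_neg (lt_of_not_ge h)]
    set u : ℂ := ((ε * x : ℝ) : ℂ) with hu_def
    have habs : ‖u‖ = x := by
      rw [hu_def, Complex.norm_real, Real.norm_eq_abs, abs_mul]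
      by_cases h : 0 ≤ hA.eigenvalues j <;>
        simp [hε_def, h, abs_of_pos hxpos]
    have hre : (1 : ℝ) + q * (ε * x) ^ 2 - (ε * x) * hA.eigenvalues j = 0 := by
      rw [hlam]
      linear_combination hroot + (q * x ^ 2 - t * x) * hε
    have hudet : ((1 + (q : ℂ) * u ^ 2) • (1 : Matrix (Fin n) (Fin n) ℂ)
        - u • (G.adjMatrix ℝ).map (fun x : ℝ => (x : ℂ))).det = 0 := by
      rw [detFactor _ hA]
      apply Finset.prod_eq_zero (Finset.mem_univ j)
      rw [hu_def]
      push_cast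
      exact_mod_cast congrArg (fun r : ℝ => (r : ℂ)) hre
    have hcon := H u (by rw [habs]; exact hx_gtq) (by rw [habs]; exact hx_lt1) hudet
    rw [habs] at hcon
    linarith [hx_gt]
  · -- Ramanujan → GTRH
    intro H u h1 h2 hdet
    rw [detFactor _ hA] at hdet
    obtain ⟨j, -, hj⟩ := Finset.prod_eq_zero_iff.mp hdet
    set l := hA.eigenvalues j with hl_def
    have hjeq : 1 + (q : ℂ) * u ^ 2 = u * (l : ℂ) := sub_eq_zero.mp hj
    have hqC : (q : ℂ) ≠ 0 := by exact_mod_cast hq0.ne'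
    by_cases hcase : |l| = q + 1
    · exfalso
      rcases (abs_eq (by positivity)).mp hcase with h | h
      · have hjeq' : 1 + (q : ℂ) * u ^ 2 = u * ((q : ℂ) + 1) := by
          rw [hjeq, h]; push_cast; ring
        have hfac : ((q : ℂ) * u - 1) * (u - 1) = 0 := by linear_combination hjeq'
        rcases mul_eq_zero.mp hfac with h0 | h0
        · have hu' : u = 1 / (q : ℂ) := by
            rw [eq_div_iff hqC]; linear_combination h0
          have : ‖u‖ = 1 / q := by
            rw [hu', norm_div, norm_one, Complex.norm_real, Real.norm_eq_abs, abs_of_pos hq0]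
          rw [this] at h1
          exact lt_irrefl _ h1
        · have hu' : u = 1 := by linear_combination h0
          rw [hu'] at h2
          simp at h2
      · have hjeq' : 1 + (q : ℂ) * u ^ 2 = u * (-((q : ℂ) + 1)) := by
          rw [hjeq, h]; push_cast; ring
        have hfac : ((q : ℂ) * u + 1) * (u + 1) = 0 := by linear_combination hjeq'
        rcases mul_eq_zero.mp hfac with h0 | h0
        · have hu' : u = -(1 / (q : ℂ)) := by
            field_simp
            linear_combination h0
          have : ‖u‖ = 1 / q := by
            rw [hu', norm_neg, norm_div, norm_one, Complex.norm_real, Real.norm_eq_abs, abs_of_pos hq0]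
          rw [this] at h1
          exact lt_irrefl _ h1
        · have hu' : u = -1 := by linear_combination h0
          rw [hu'] at h2
          simp at h2
    · have hram : |l| ≤ 2 * Real.sqrt q := H j hcase
      by_cases hconj : (starRingEnd ℂ) u = u
      · -- u real
        have hu : ((u.re : ℝ) : ℂ) = u := Complex.conj_eq_iff_re.mp hconj
        set xr := u.re with hxr_def
        have hre : 1 + q * xr ^ 2 = xr * l := by
          have h := hjeq
          rw [← hu] at h
          exact_mod_cast h
        have hpos : 0 ≤ xr * l := by rw [← hre]; positivity
        have h3 : 1 + q * xr ^ 2 ≤ 2 * Real.sqrt q * |xr| := by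
          calc 1 + q * xr ^ 2 = xr * l := hre
            _ = |xr * l| := (abs_of_nonneg hpos).symm
            _ = |xr| * |l| := abs_mul _ _
            _ ≤ |xr| * (2 * Real.sqrt q) := mul_le_mul_of_nonneg_left hram (abs_nonneg _)
            _ = 2 * Real.sqrt q * |xr| := mul_comm _ _
        have heq : (Real.sqrt q * |xr| - 1) ^ 2 = 0 := by
          nlinarith [hss, sq_abs xr, h3]
        have hval : Real.sqrt q * |xr| = 1 := by
          have := (pow_eq_zero_iff two_ne_zero).mp heq
          linarith
        rw [← hu, Complex.norm_real, Real.norm_eq_abs, eq_div_iff hsqpos.ne']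
        linarith [mul_comm |xr| (Real.sqrt q)]
      · set v := (starRingEnd ℂ) u with hv_def
        have hjc : 1 + (q : ℂ) * v ^ 2 = v * (l : ℂ) := by
          have h := congrArg (starRingEnd ℂ) hjeq
          simpa [hv_def, map_add, map_mul, map_pow, Complex.conj_ofReal] using h
        have hne : u - v ≠ 0 := sub_ne_zero.mpr (fun h => hconj (by rw [← h]))
        have hl : (l : ℂ) = q * (u + v) := by
          have hsub : (u - v) * ((q : ℂ) * (u + v) - l) = 0 := by
            linear_combination hjeq - hjc
          rcases mul_eq_zero.mp hsub with h | h
          · exact absurd h hne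
          · exact (sub_eq_zero.mp h).symm
        have huv : 1 - (q : ℂ) * (u * v) = 0 := by
          linear_combination hjeq + u * hl
        have hns : (Complex.normSq u : ℂ) = ((1 / q : ℝ) : ℂ) := by
          rw [← Complex.mul_conj u, ← hv_def]
          push_cast
          field_simp
          linear_combination -huv
        have hns' : Complex.normSq u = 1 / q := by exact_mod_cast hns
        have habs2 : ‖u‖ = Real.sqrt (1 / q) := by
          rw [← Real.sqrt_sq (norm_nonneg u), Complex.sq_norm, hns']
        rw [habs2, one_div, Real.sqrt_inv, one_div]
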